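/- Let I ⊆ ℝ be an open interval and f : I → ℝ a C³ function satisfying 2 f′(z) f‴(z) − 3 (f″(z))² = 0 on I. If f″ vanishes identically on I, then there exist constants C₃, C₄ with f(z) = C₃z + C₄ on I. If instead f″ vanishes nowhere on I, then there exist constants C₃, C₄, C₅ with C₄ ≠ 0 and z + C₃ ≠ 0 for all z ∈ I, such that f(z) = C₄/(z+C₃) + C₅ on I. -/

import Mathlib

private lemma const_of_hasDerivAt_zero {I : Set ℝ} (hIopen : IsOpen I) (hconv : Convex ℝ I)
    {g : ℝ → ℝ} (hg : ∀ z ∈ I, HasDerivAt g 0 z) {x y : ℝ} (hx : x ∈ I) (hy : y ∈ I) :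
    g x = g y := by
  refine hconv.is_const_of_fderivWithin_eq_zero
    (fun z hz => ((hg z hz).differentiableAt).differentiableWithinAt)
    (fun z hz => ?_) hx hy
  have h0 : HasFDerivAt g (0 : ℝ →L[ℝ] ℝ) z := by
    have e : (ContinuousLinearMap.toSpanSingleton ℝ (0 : ℝ)) = 0 := by
      ext
      simp
    have h := (hg z hz).hasFDerivAt
    rwa [e] at h
  exact (h0.hasFDerivWithinAt).fderivWithin (hIopen.uniqueDiffWithinAt hz)

/-- classification of the C³ solutions of the Liouville-type equation
`2 f′ f‴ − 3 (f″)² = 0` on an open interval: if `f″ ≡ 0` then `f` is affine, and if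
`f″` vanishes nowhere then `f(z) = C₄/(z+C₃) + C₅` with `C₄ ≠ 0` and `z + C₃ ≠ 0`
on the interval. -/
theorem stmt_8 (I : Set ℝ) (hIopen : IsOpen I) (hIconn : I.OrdConnected)
    (f : ℝ → ℝ) (hf : ContDiffOn ℝ 3 f I)
    (heq : ∀ z ∈ I,
      2 * deriv f z * deriv (deriv (deriv f)) z - 3 * (deriv (deriv f) z) ^ 2 = 0) :
    ((∀ z ∈ I, deriv (deriv f) z = 0) →
      ∃ C₃ C₄ : ℝ, ∀ z ∈ I, f z = C₃ * z + C₄) ∧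
    ((∀ z ∈ I, deriv (deriv f) z ≠ 0) →
      ∃ C₃ C₄ C₅ : ℝ, C₄ ≠ 0 ∧ (∀ z ∈ I, z + C₃ ≠ 0) ∧
        ∀ z ∈ I, f z = C₄ / (z + C₃) + C₅) := by
  have hconv : Convex ℝ I := convex_iff_ordConnected.mpr hIconn
  have hf1 : ContDiffOn ℝ 2 (deriv f) I := hf.deriv_of_isOpen hIopen (by norm_num)
  have hf2 : ContDiffOn ℝ 1 (deriv (deriv f)) I := hf1.deriv_of_isOpen hIopen (by norm_num)
  have d1 : ∀ z ∈ I, HasDerivAt f (deriv f z) z := fun z hz =>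
    ((hf.differentiableOn (by norm_num)).differentiableAt (hIopen.mem_nhds hz)).hasDerivAt
  have d2 : ∀ z ∈ I, HasDerivAt (deriv f) (deriv (deriv f) z) z := fun z hz =>
    ((hf1.differentiableOn (by norm_num)).differentiableAt (hIopen.mem_nhds hz)).hasDerivAt
  have d3 : ∀ z ∈ I, HasDerivAt (deriv (deriv f)) (deriv (deriv (deriv f)) z) z := fun z hz =>
    ((hf2.differentiableOn one_ne_zero).differentiableAt (hIopen.mem_nhds hz)).hasDerivAt
  constructor
  · intro h2
    rcases I.eq_empty_or_nonempty with hI | ⟨z₀, hz₀⟩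
    · exact ⟨0, 0, by simp [hI]⟩
    have hc : ∀ z ∈ I, deriv f z = deriv f z₀ := fun z hz =>
      const_of_hasDerivAt_zero hIopen hconv
        (fun w hw => (h2 w hw) ▸ d2 w hw) hz hz₀
    refine ⟨deriv f z₀, f z₀ - deriv f z₀ * z₀, fun z hz => ?_⟩
    have hkey : (fun w => f w - deriv f z₀ * w) z = (fun w => f w - deriv f z₀ * w) z₀ := by
      refine const_of_hasDerivAt_zero (g := fun w => f w - deriv f z₀ * w) hIopen hconv (fun w hw => ?_) hz hz₀
      have h := (d1 w hw).sub ((hasDerivAt_id w).const_mul (deriv f z₀))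
      exact h.congr_deriv (by simp [hc w hw])
    simp only [] at hkey
    linarith
  · intro h2
    rcases I.eq_empty_or_nonempty with hI | ⟨z₀, hz₀⟩
    · exact ⟨0, 1, 0, one_ne_zero, by simp [hI], by simp [hI]⟩
    have h1 : ∀ z ∈ I, deriv f z ≠ 0 := by
      intro z hz h0
      have he := heq z hz
      rw [h0] at he
      exact h2 z hz (by nlinarith [sq_nonneg (deriv (deriv f) z)])
    set v : ℝ → ℝ := fun z => deriv f z / deriv (deriv f) z with hv
    have hvne : ∀ z ∈ I, v z ≠ 0 := fun z hz => div_ne_zero (h1 z hz) (h2 z hz)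
    have hvmul : ∀ z ∈ I, deriv f z = v z * deriv (deriv f) z := fun z hz =>
      (div_mul_cancel₀ _ (h2 z hz)).symm
    -- v has constant derivative -1/2
    have hvd : ∀ z ∈ I, HasDerivAt (fun w => v w + w / 2) 0 z := by
      intro z hz
      have h := ((d2 z hz).div (d3 z hz) (h2 z hz)).add
        ((hasDerivAt_id z).div_const 2)
      refine h.congr_deriv ?_
      have e := heq z hz
      have hne := h2 z hz
      field_simp
      nlinarith [e]
    set C₃ : ℝ := -z₀ - 2 * v z₀ with hC₃
    have key : ∀ z ∈ I, z + C₃ = -2 * v z := by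
      intro z hz
      have h := const_of_hasDerivAt_zero hIopen hconv hvd hz hz₀
      rw [hC₃]; linarith
    have hne : ∀ z ∈ I, z + C₃ ≠ 0 := by
      intro z hz
      rw [key z hz]
      exact mul_ne_zero (by norm_num) (hvne z hz)
    -- deriv f z * (z + C₃)^2 is constant
    have hG : ∀ z ∈ I, HasDerivAt (fun w => deriv f w * (w + C₃) ^ 2) 0 z := by
      intro z hz
      have hp : HasDerivAt (fun w => (w + C₃) ^ 2) (2 * (z + C₃)) z := by
        have := ((hasDerivAt_id z).add_const C₃).pow 2
        exact this.congr_deriv (by simp)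
      have h := (d2 z hz).mul hp
      refine h.congr_deriv ?_
      rw [key z hz, hvmul z hz]
      ring
    set A : ℝ := deriv f z₀ * (z₀ + C₃) ^ 2 with hA
    have hGA : ∀ z ∈ I, deriv f z * (z + C₃) ^ 2 = A := fun z hz =>
      const_of_hasDerivAt_zero hIopen hconv hG hz hz₀
    have hAne : A ≠ 0 := mul_ne_zero (h1 z₀ hz₀) (pow_ne_zero 2 (hne z₀ hz₀))
    -- f z + A/(z+C₃) is constant
    have hH : ∀ z ∈ I, HasDerivAt (fun w => f w + A / (w + C₃)) 0 z := by
      intro z hz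
      have hq : HasDerivAt (fun w => A / (w + C₃))
          ((0 * (z + C₃) - A * 1) / (z + C₃) ^ 2) z :=
        (hasDerivAt_const z A).div ((hasDerivAt_id z).add_const C₃) (hne z hz)
      have h' : (0 * (z + C₃) - A * 1) / (z + C₃) ^ 2 = -deriv f z := by
        rw [← hGA z hz]
        field_simp
        rw [zero_sub, neg_div, mul_div_cancel_left₀ _ (hne z hz)]
      have h := (d1 z hz).add hq
      rw [h'] at h
      exact h.congr_deriv (by simp)
    refine ⟨C₃, -A, f z₀ + A / (z₀ + C₃), neg_ne_zero.mpr hAne, hne, fun z hz => ?_⟩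
    have h := const_of_hasDerivAt_zero hIopen hconv hH hz hz₀
    rw [neg_div]
    linarith
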